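/- Let P be an incomplete weighted profile over a finite set of candidates. Then the fair strong Condorcet winners coincide with the strong Condorcet winners: FSC(P) = SC(P). That is, a candidate wins every balanced agenda in every completion of P if and only if it wins every agenda in every completion of P. -/

import Mathlib

open scoped Classical

/-- An agenda: a binary tree whose leaves are labelled with candidates. -/
inductive Agenda (α : Type) : Type
  | leaf (a : α) : Agenda α
  | node (l r : Agenda α) : Agenda α

namespace Agenda

/-- The list of leaf labels of an agenda. -/
def leaves {α : Type} : Agenda α → List α
  | leaf a => [a]
  | node l r => leaves l ++ leaves r

/-- The list of depths of the leaves of an agenda. -/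
def depths {α : Type} : Agenda α → List ℕ
  | leaf _ => [0]
  | node l r => (depths l ++ depths r).map (· + 1)

end Agenda

/-- A valid agenda: leaves labelled bijectively with the candidates. -/
def IsAgenda {α : Type} [Fintype α] (t : Agenda α) : Prop :=
  t.leaves.Nodup ∧ ∀ a : α, a ∈ t.leaves

/-- A balanced agenda: max and min leaf depths differ by at most 1. -/
def IsBalanced {α : Type} (t : Agenda α) : Prop :=
  ∀ d₁ ∈ t.depths, ∀ d₂ ∈ t.depths, d₁ ≤ d₂ + 1

/-- A tournament: complete asymmetric directed graph on the candidates. -/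
def IsTournament {α : Type} (T : α → α → Prop) : Prop :=
  (∀ a, ¬ T a a) ∧ ∀ a b : α, a ≠ b → (T a b ↔ ¬ T b a)

/-- Winner of an agenda under a tournament: each internal node is won by
whichever child's winner beats the other; the root's candidate wins. -/
noncomputable def winner {α : Type} (T : α → α → Prop) : Agenda α → α
  | .leaf a => a
  | .node l r => if T (winner T l) (winner T r) then winner T l else winner T r

/-- Strict partial order: asymmetric and transitive. -/
def IsSPO {α : Type} (r : α → α → Prop) : Prop :=
  (∀ a b, r a b → ¬ r b a) ∧ (∀ a b c, r a b → r b c → r a c)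

/-- Strict total order. -/
def IsSTO {α : Type} (r : α → α → Prop) : Prop :=
  IsSPO r ∧ ∀ a b : α, a ≠ b → r a b ∨ r b a

/-- An (incomplete) weighted profile: a finite sequence of agents, each with a
positive weight and a strict partial order, the sum of weights being odd. -/
structure Profile (α : Type) where
  agents : List (ℕ × (α → α → Prop))
  pos : ∀ p ∈ agents, 0 < p.1
  spo : ∀ p ∈ agents, IsSPO p.2
  oddSum : Odd (agents.map Prod.fst).sum

/-- Total weight of agents preferring `a` to `b`. -/
noncomputable def prefWeight {α : Type} (P : Profile α) (a b : α) : ℕ :=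
  (P.agents.map (fun p => if p.2 a b then p.1 else 0)).sum

/-- The majority graph of a profile. -/
def maj {α : Type} (P : Profile α) (a b : α) : Prop :=
  prefWeight P b a < prefWeight P a b

/-- `Q` is a completion of `P`: same weights, each agent's partial order is
replaced by a strict total order extending it. -/
def IsCompletion {α : Type} (P Q : Profile α) : Prop :=
  List.Forall₂ (fun p q => p.1 = q.1 ∧ IsSTO q.2 ∧ ∀ a b, p.2 a b → q.2 a b)
    P.agents Q.agents

/-- `T` extends the (incomplete majority) graph `G`. -/
def Extends {α : Type} (G T : α → α → Prop) : Prop := ∀ a b, G a b → T a b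

/-- `A` wins some agenda under `T`. -/
def WinsSome {α : Type} [Fintype α] (T : α → α → Prop) (A : α) : Prop :=
  ∃ t : Agenda α, IsAgenda t ∧ winner T t = A

/-- `A` wins every agenda under `T`. -/
def WinsAll {α : Type} [Fintype α] (T : α → α → Prop) (A : α) : Prop :=
  ∀ t : Agenda α, IsAgenda t → winner T t = A

/-- `A` wins some balanced agenda under `T`. -/
def FWinsSome {α : Type} [Fintype α] (T : α → α → Prop) (A : α) : Prop :=
  ∃ t : Agenda α, IsAgenda t ∧ IsBalanced t ∧ winner T t = A

/-- `A` wins every balanced agenda under `T`. -/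
def FWinsAll {α : Type} [Fintype α] (T : α → α → Prop) (A : α) : Prop :=
  ∀ t : Agenda α, IsAgenda t → IsBalanced t → winner T t = A

/-- Weak possible winner of a profile. -/
def WPp {α : Type} [Fintype α] (P : Profile α) (A : α) : Prop :=
  ∃ Q : Profile α, IsCompletion P Q ∧ WinsSome (maj Q) A

/-- Strong possible winner of a profile. -/
def SPp {α : Type} [Fintype α] (P : Profile α) (A : α) : Prop :=
  ∀ Q : Profile α, IsCompletion P Q → WinsSome (maj Q) A

/-- Weak Condorcet winner of a profile. -/
def WCp {α : Type} [Fintype α] (P : Profile α) (A : α) : Prop :=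
  ∃ Q : Profile α, IsCompletion P Q ∧ WinsAll (maj Q) A

/-- Strong Condorcet winner of a profile. -/
def SCp {α : Type} [Fintype α] (P : Profile α) (A : α) : Prop :=
  ∀ Q : Profile α, IsCompletion P Q → WinsAll (maj Q) A

/-- Weak possible winner of an incomplete majority graph. -/
def WPg {α : Type} [Fintype α] (G : α → α → Prop) (A : α) : Prop :=
  ∃ T : α → α → Prop, IsTournament T ∧ Extends G T ∧ WinsSome T A

/-- Strong possible winner of an incomplete majority graph. -/
def SPg {α : Type} [Fintype α] (G : α → α → Prop) (A : α) : Prop :=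
  ∀ T : α → α → Prop, IsTournament T → Extends G T → WinsSome T A

/-- Weak Condorcet winner of an incomplete majority graph. -/
def WCg {α : Type} [Fintype α] (G : α → α → Prop) (A : α) : Prop :=
  ∃ T : α → α → Prop, IsTournament T ∧ Extends G T ∧ WinsAll T A

/-- Strong Condorcet winner of an incomplete majority graph. -/
def SCg {α : Type} [Fintype α] (G : α → α → Prop) (A : α) : Prop :=
  ∀ T : α → α → Prop, IsTournament T → Extends G T → WinsAll T A

/-- A profile is unweighted if every agent has weight 1. -/
def IsUnweighted {α : Type} (P : Profile α) : Prop :=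
  ∀ p ∈ P.agents, p.1 = 1

/-- `Q` is the unweighted profile corresponding to `P`: each agent of
weight `k` is replaced by `k` agents of weight 1 with the same order. -/
def IsUnwVersion {α : Type} (P Q : Profile α) : Prop :=
  Q.agents = P.agents.flatMap (fun p => List.replicate p.1 (1, p.2))

/-- Fair strong Condorcet winner of a profile (balanced agendas only). -/
def FSCp {α : Type} [Fintype α] (P : Profile α) (A : α) : Prop :=
  ∀ Q : Profile α, IsCompletion P Q → FWinsAll (maj Q) A

/-- Fair weak Condorcet winner of a profile (balanced agendas only). -/
def FWCp {α : Type} [Fintype α] (P : Profile α) (A : α) : Prop :=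
  ∃ Q : Profile α, IsCompletion P Q ∧ FWinsAll (maj Q) A

/-- Fair weak possible winner of a profile (balanced agendas only). -/
def FWPp {α : Type} [Fintype α] (P : Profile α) (A : α) : Prop :=
  ∃ Q : Profile α, IsCompletion P Q ∧ FWinsSome (maj Q) A

noncomputable def build {α : Type} (d : α) : List (Agenda α) → Agenda α
  | [] => .leaf d
  | [t] => t
  | t :: s :: ts =>
      .node (build d ((t :: s :: ts).take (((t :: s :: ts).length + 1) / 2)))
            (build d ((t :: s :: ts).drop (((t :: s :: ts).length + 1) / 2)))
termination_by l => l.length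
decreasing_by
  · simp [List.length_take]; omega
  · simp [List.length_drop]; omega

lemma build_eq_node {α : Type} (d : α) (ts : List (Agenda α)) (h : 2 ≤ ts.length) :
    build d ts = .node (build d (ts.take ((ts.length + 1) / 2)))
      (build d (ts.drop ((ts.length + 1) / 2))) := by
  rcases ts with _ | ⟨a, ts⟩
  · simp at h
  rcases ts with _ | ⟨b, l⟩
  · simp at h
  rw [build]

lemma take_drop_facts {α : Type} (l : List (Agenda α)) (h2 : 2 ≤ l.length) :
    (l.take ((l.length + 1) / 2)).length = (l.length + 1) / 2 ∧
    (l.drop ((l.length + 1) / 2)).length = l.length - (l.length + 1) / 2 ∧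
    l.take ((l.length + 1) / 2) ≠ [] ∧ l.drop ((l.length + 1) / 2) ≠ [] ∧
    (l.take ((l.length + 1) / 2)).length < l.length ∧
    (l.drop ((l.length + 1) / 2)).length < l.length := by
  have h1 : (l.take ((l.length + 1) / 2)).length = (l.length + 1) / 2 := by
    rw [List.length_take]; omega
  have h2' : (l.drop ((l.length + 1) / 2)).length = l.length - (l.length + 1) / 2 :=
    List.length_drop
  refine ⟨h1, h2', ?_, ?_, ?_, ?_⟩
  · intro hc; rw [hc] at h1; simp at h1; omega
  · intro hc; rw [hc] at h2'; simp at h2'; omega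
  · omega
  · omega

lemma leaves_build {α : Type} (d : α) :
    ∀ (n : ℕ) (ts : List (Agenda α)), ts.length ≤ n → ts ≠ [] →
      (build d ts).leaves = ts.flatMap Agenda.leaves := by
  intro n
  induction n with
  | zero => intro ts h h'; cases ts <;> simp at h h'
  | succ n ih =>
    intro ts hlen hne
    rcases ts with _ | ⟨t, ts'⟩
    · exact absurd rfl hne
    rcases ts' with _ | ⟨s, ts''⟩
    · simp [build, Agenda.leaves]
    set l : List (Agenda α) := t :: s :: ts'' with hl
    have h2 : 2 ≤ l.length := by simp [hl]
    obtain ⟨f1, f2, f3, f4, f5, f6⟩ := take_drop_facts l h2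
    rw [build_eq_node d l h2]
    have h1 : (build d (l.take ((l.length + 1) / 2))).leaves
        = (l.take ((l.length + 1) / 2)).flatMap Agenda.leaves := ih _ (by omega) f3
    have h2' : (build d (l.drop ((l.length + 1) / 2))).leaves
        = (l.drop ((l.length + 1) / 2)).flatMap Agenda.leaves := ih _ (by omega) f4
    show (build d _).leaves ++ (build d _).leaves = _
    rw [h1, h2', ← List.flatMap_append, List.take_append_drop]

lemma winner_build_mem {α : Type} (T : α → α → Prop) (d : α) :
    ∀ (n : ℕ) (ts : List (Agenda α)), ts.length ≤ n → ts ≠ [] →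
      winner T (build d ts) ∈ ts.map (winner T) := by
  intro n
  induction n with
  | zero => intro ts h h'; cases ts <;> simp at h h'
  | succ n ih =>
    intro ts hlen hne
    rcases ts with _ | ⟨t, ts'⟩
    · exact absurd rfl hne
    rcases ts' with _ | ⟨s, ts''⟩
    · simp [build]
    set l : List (Agenda α) := t :: s :: ts'' with hl
    have h2 : 2 ≤ l.length := by simp [hl]
    obtain ⟨f1, f2, f3, f4, f5, f6⟩ := take_drop_facts l h2
    rw [build_eq_node d l h2]
    have h1 := ih (l.take ((l.length + 1) / 2)) (by omega) f3
    have h2' := ih (l.drop ((l.length + 1) / 2)) (by omega) f4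
    have hsplit : l.map (winner T) = (l.take ((l.length + 1) / 2)).map (winner T)
        ++ (l.drop ((l.length + 1) / 2)).map (winner T) := by
      rw [← List.map_append, List.take_append_drop]
    rw [hsplit]
    show winner T (.node _ _) ∈ _
    rw [winner]
    split
    · exact List.mem_append_left _ h1
    · exact List.mem_append_right _ h2'

lemma log_le_log_half (m : ℕ) (hm : 2 ≤ m) : Nat.log 2 m ≤ Nat.log 2 ((m + 1) / 2) + 1 := by
  have h1 : Nat.log 2 (m / 2) = Nat.log 2 m - 1 := Nat.log_div_base 2 m
  have h3 : Nat.log 2 (m / 2) ≤ Nat.log 2 ((m + 1) / 2) := Nat.log_mono_right (by omega)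
  have h4 : 0 < Nat.log 2 m := Nat.log_pos one_lt_two hm
  omega

lemma clog_half_succ (m : ℕ) (hm : 2 ≤ m) :
    Nat.clog 2 ((m + 1) / 2) + 1 = Nat.clog 2 m := by
  have h := Nat.clog_of_two_le (b := 2) one_lt_two hm
  rw [h]
  norm_num

lemma clog_half_le_log (m : ℕ) (hm : 1 ≤ m) :
    Nat.clog 2 ((m + 1) / 2) ≤ Nat.log 2 m := by
  have h1 : m < 2 ^ (Nat.log 2 m + 1) := Nat.lt_pow_succ_log_self one_lt_two m
  have h2 : (m + 1) / 2 ≤ 2 ^ Nat.log 2 m := by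
    have h3 : 2 ^ (Nat.log 2 m + 1) = 2 * 2 ^ Nat.log 2 m := by ring
    omega
  exact (Nat.clog_le_iff_le_pow one_lt_two).mpr h2

lemma log_floor_half (m : ℕ) (hm : 2 ≤ m) : Nat.log 2 (m / 2) + 1 = Nat.log 2 m := by
  have h1 : Nat.log 2 (m / 2) = Nat.log 2 m - 1 := Nat.log_div_base 2 m
  have h4 : 0 < Nat.log 2 m := Nat.log_pos one_lt_two hm
  omega

lemma depths_build_leaves {α : Type} (d : α) :
    ∀ (n : ℕ) (cs : List α), cs.length ≤ n → cs ≠ [] →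
      ∀ e ∈ (build d (cs.map .leaf)).depths,
        Nat.log 2 cs.length ≤ e ∧ e ≤ Nat.clog 2 cs.length := by
  intro n
  induction n with
  | zero => intro cs h h'; cases cs <;> simp at h h'
  | succ n ih =>
    intro cs hlen hne
    rcases cs with _ | ⟨c, cs'⟩
    · exact absurd rfl hne
    rcases cs' with _ | ⟨c2, cs''⟩
    · simp [build, Agenda.depths]
    set cl : List α := c :: c2 :: cs'' with hcl
    have hm : 2 ≤ cl.length := by simp [hcl]
    set m := cl.length with hmm
    set l : List (Agenda α) := cl.map .leaf with hl
    have hll : l.length = m := by simp [hl, hmm]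
    have h2 : 2 ≤ l.length := by omega
    obtain ⟨f1, f2, f3, f4, f5, f6⟩ := take_drop_facts l h2
    rw [build_eq_node d l h2]
    have htake : l.take ((l.length + 1) / 2) = (cl.take ((m + 1) / 2)).map .leaf := by
      rw [hll, hl, List.map_take]
    have hdrop : l.drop ((l.length + 1) / 2) = (cl.drop ((m + 1) / 2)).map .leaf := by
      rw [hll, hl, List.map_drop]
    have hctl : (cl.take ((m + 1) / 2)).length = (m + 1) / 2 := by
      rw [List.length_take]; omega
    have hcdl : (cl.drop ((m + 1) / 2)).length = m - (m + 1) / 2 := by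
      rw [List.length_drop]
    have hih1 : ∀ e ∈ (build d ((cl.take ((m + 1) / 2)).map .leaf)).depths,
        Nat.log 2 ((m + 1) / 2) ≤ e ∧ e ≤ Nat.clog 2 ((m + 1) / 2) := by
      intro e he
      have := ih (cl.take ((m + 1) / 2)) (by omega)
        (by intro hc; rw [hc] at hctl; simp at hctl; omega) e he
      rwa [hctl] at this
    have hih2 : ∀ e ∈ (build d ((cl.drop ((m + 1) / 2)).map .leaf)).depths,
        Nat.log 2 (m - (m + 1) / 2) ≤ e ∧ e ≤ Nat.clog 2 (m - (m + 1) / 2) := by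
      intro e he
      have := ih (cl.drop ((m + 1) / 2)) (by omega)
        (by intro hc; rw [hc] at hcdl; simp at hcdl; omega) e he
      rwa [hcdl] at this
    intro e he
    rw [Agenda.depths] at he
    simp only [List.mem_map, List.mem_append] at he
    obtain ⟨e', he', rfl⟩ := he
    have hfloor : m - (m + 1) / 2 = m / 2 := by omega
    rcases he' with h | h
    · rw [htake] at h
      obtain ⟨hlo, hhi⟩ := hih1 e' h
      constructor
      · have := log_le_log_half m hm; omega
      · have := clog_half_succ m hm; omega
    · rw [hdrop] at h
      obtain ⟨hlo, hhi⟩ := hih2 e' h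
      rw [hfloor] at hlo hhi
      constructor
      · have := log_floor_half m hm; omega
      · have h5 : Nat.clog 2 (m / 2) ≤ Nat.clog 2 ((m + 1) / 2) :=
          Nat.clog_mono_right 2 (by omega)
        have := clog_half_succ m hm; omega

lemma depths_build_pair {α : Type} (d A B : α) :
    ∀ (n : ℕ) (cs : List α), cs.length ≤ n →
      ∀ e ∈ (build d (cs.map .leaf ++ [.node (.leaf A) (.leaf B)])).depths,
        Nat.log 2 (cs.length + 1) ≤ e ∧ e ≤ Nat.log 2 (cs.length + 1) + 1 := by
  intro n
  induction n with
  | zero =>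
    intro cs h
    have : cs = [] := by cases cs <;> simp_all
    subst this
    simp [build, Agenda.depths, winner]
  | succ n ih =>
    intro cs hlen
    rcases cs with _ | ⟨c, cs'⟩
    · simp [build, Agenda.depths, winner]
    set cl : List α := c :: cs' with hcl
    set l : List (Agenda α) := cl.map .leaf ++ [.node (.leaf A) (.leaf B)] with hl
    set m := cl.length + 1 with hmm
    have hm : 2 ≤ m := by simp [hmm, hcl]
    have hll : l.length = m := by simp [hl, hmm]
    have h2 : 2 ≤ l.length := by omega
    set a := (m + 1) / 2 with hadef
    have haa : (l.length + 1) / 2 = a := by rw [hll]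
    have ham : a ≤ cl.length := by
      simp only [hadef, hmm]; omega
    have htake : l.take ((l.length + 1) / 2) = (cl.take a).map .leaf := by
      rw [haa, hl, List.take_append_of_le_length (by simpa using ham), List.map_take]
    have hdrop : l.drop ((l.length + 1) / 2)
        = (cl.drop a).map .leaf ++ [.node (.leaf A) (.leaf B)] := by
      rw [haa, hl, List.drop_append_of_le_length (by simpa using ham), List.map_drop]
    have hctl : (cl.take a).length = a := by rw [List.length_take]; omega
    have hcdl : (cl.drop a).length = cl.length - a := List.length_drop
    have hfl : cl.length - a + 1 = m / 2 := by omega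
    rw [build_eq_node d l h2]
    intro e he
    rw [Agenda.depths] at he
    simp only [List.mem_map, List.mem_append] at he
    obtain ⟨e', he', rfl⟩ := he
    rcases he' with h | h
    · rw [htake] at h
      have hbnd := depths_build_leaves d (cl.take a).length (cl.take a) le_rfl
        (by intro hc; rw [hc] at hctl; simp at hctl; omega) e' h
      rw [hctl] at hbnd
      obtain ⟨hlo, hhi⟩ := hbnd
      rw [hadef] at hlo hhi
      constructor
      · have := log_le_log_half m hm; omega
      · have := clog_half_le_log m (by omega); omega
    · rw [hdrop] at h
      have hbnd := ih (cl.drop a) (by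
        rw [hcdl]; simp only [hmm, hcl] at *; simp [hcl] at hlen ⊢; omega) e' h
      rw [hcdl, hfl] at hbnd
      obtain ⟨hlo, hhi⟩ := hbnd
      have := log_floor_half m hm
      omega

lemma winner_dom {α : Type} (T : α → α → Prop)
    (hasym : ∀ a b, T a b → ¬ T b a) (A : α) (hdom : ∀ b, b ≠ A → T A b) :
    ∀ t : Agenda α, A ∈ t.leaves → winner T t = A := by
  intro t
  induction t with
  | leaf a => intro h; simp [Agenda.leaves] at h; simp [winner, h]
  | node l r ihl ihr =>
    intro h
    rw [Agenda.leaves, List.mem_append] at h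
    rw [winner]
    rcases h with h | h
    · rw [ihl h]
      by_cases hr : winner T r = A
      · rw [hr]; simp
      · rw [if_pos (hdom _ hr)]
    · rw [ihr h]
      by_cases hl : winner T l = A
      · rw [hl]; simp
      · rw [if_neg (hasym _ _ (hdom _ hl))]

lemma forall2_sto {α : Type} :
    ∀ (l₁ l₂ : List (ℕ × (α → α → Prop))),
      List.Forall₂ (fun p q => p.1 = q.1 ∧ IsSTO q.2 ∧ ∀ a b, p.2 a b → q.2 a b) l₁ l₂ →
      ∀ q ∈ l₂, IsSTO q.2 := by
  intro l₁ l₂ h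
  induction h with
  | nil => intro q hq; exact absurd hq List.not_mem_nil
  | cons h₁ h₂ ih =>
    intro q hq
    rcases List.mem_cons.mp hq with rfl | hq
    · exact h₁.2.1
    · exact ih q hq

lemma completion_sto {α : Type} {P Q : Profile α} (h : IsCompletion P Q) :
    ∀ q ∈ Q.agents, IsSTO q.2 :=
  forall2_sto _ _ h

lemma prefW_list {α : Type} {a b : α} (hab : a ≠ b) :
    ∀ l : List (ℕ × (α → α → Prop)), (∀ q ∈ l, IsSTO q.2) →
      (l.map fun p => if p.2 a b then p.1 else 0).sum
        + (l.map fun p => if p.2 b a then p.1 else 0).sum = (l.map Prod.fst).sum := by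
  intro l
  induction l with
  | nil => simp
  | cons p l ih =>
    intro hSTO
    have hp : IsSTO p.2 := hSTO p List.mem_cons_self
    have hl : ∀ q ∈ l, IsSTO q.2 := fun q hq => hSTO q (List.mem_cons_of_mem _ hq)
    simp only [List.map_cons, List.sum_cons]
    rw [show ∀ x y z w : ℕ, (x + y) + (z + w) = (x + z) + (y + w) by intros; ring]
    rw [ih hl]
    congr 1
    by_cases hab' : p.2 a b
    · rw [if_pos hab', if_neg (hp.1.1 a b hab')]; omega
    · rcases hp.2 a b hab with h | h
      · exact absurd h hab'
      · rw [if_neg hab', if_pos h]; omega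

lemma prefWeight_add {α : Type} (Q : Profile α) (hSTO : ∀ q ∈ Q.agents, IsSTO q.2)
    {a b : α} (hab : a ≠ b) :
    prefWeight Q a b + prefWeight Q b a = (Q.agents.map Prod.fst).sum :=
  prefW_list hab Q.agents hSTO

lemma maj_total {α : Type} {P Q : Profile α} (hQ : IsCompletion P Q)
    {a b : α} (hab : a ≠ b) : maj Q a b ∨ maj Q b a := by
  have hsum := prefWeight_add Q (completion_sto hQ) hab
  obtain ⟨k, hk⟩ := Q.oddSum
  unfold maj
  omega

lemma maj_asymm {α : Type} (Q : Profile α) : ∀ a b : α, maj Q a b → ¬ maj Q b a := by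
  intro a b; unfold maj; omega

lemma flatMap_leaf {α : Type} (l : List α) :
    (l.map Agenda.leaf).flatMap Agenda.leaves = l := by
  induction l with
  | nil => simp
  | cons c l ih => simp [Agenda.leaves, ih]

lemma bad_agenda {α : Type} [Fintype α] (T : α → α → Prop)
    (hasym : ∀ a b, T a b → ¬ T b a) {A B : α} (hne : B ≠ A) (hBA : T B A) :
    ∃ t : Agenda α, IsAgenda t ∧ IsBalanced t ∧ winner T t ≠ A := by
  classical
  set others : List α := ((Finset.univ.erase A).erase B).toList with ho
  have hoA : A ∉ others := by simp [ho]
  have hoB : B ∉ others := by simp [ho]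
  have hod : others.Nodup := Finset.nodup_toList _
  set p : Agenda α := .node (.leaf A) (.leaf B) with hp
  set ts : List (Agenda α) := others.map .leaf ++ [p] with hts
  have htsne : ts ≠ [] := by simp [hts]
  have hwp : winner T p = B := by
    rw [hp, winner]
    rw [show winner T (.leaf A) = A from rfl, show winner T (.leaf B) = B from rfl,
      if_neg (hasym _ _ hBA)]
  refine ⟨build A ts, ?_, ?_, ?_⟩
  · have hlv : (build A ts).leaves = others ++ [A, B] := by
      rw [leaves_build A ts.length ts le_rfl htsne, hts, List.flatMap_append,
        flatMap_leaf]
      simp [hp, Agenda.leaves]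
    constructor
    · rw [hlv, List.nodup_append']
      refine ⟨hod, by simp [Ne.symm hne], ?_⟩
      intro x hx hx2
      simp only [List.mem_cons, List.mem_singleton, List.not_mem_nil, or_false] at hx2
      rcases hx2 with rfl | rfl
      · exact hoA hx
      · exact hoB hx
    · intro a
      rw [hlv]
      by_cases hA : a = A
      · simp [hA]
      by_cases hB : a = B
      · simp [hB]
      · simp [ho, hA, hB]
  · intro d₁ h₁ d₂ h₂
    have hb := depths_build_pair A A B others.length others le_rfl
    rw [hts, hp] at h₁ h₂
    have b₁ := hb d₁ h₁
    have b₂ := hb d₂ h₂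
    omega
  · intro hwA
    have hw := winner_build_mem T A ts.length ts le_rfl htsne
    rw [hwA, hts, List.map_append] at hw
    rcases List.mem_append.mp hw with h | h
    · rw [List.map_map] at h
      simp only [List.mem_map, Function.comp_apply] at h
      obtain ⟨c, hc, hcw⟩ := h
      rw [show winner T (Agenda.leaf c) = c from rfl] at hcw
      rw [hcw] at hc
      exact hoA hc
    · simp only [List.map_cons, List.map_nil, List.mem_singleton] at h
      rw [hwp] at h
      exact hne h.symm

theorem stmt13' {α : Type} [Fintype α] (P : Profile α) :
    ∀ A : α, FSCp P A ↔ SCp P A := by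
  intro A
  constructor
  · intro hF Q hQ t ht
    have hdom : ∀ b, b ≠ A → maj Q A b := by
      intro B hB
      by_contra hnot
      have hBA : maj Q B A := (maj_total hQ hB).resolve_right hnot
      obtain ⟨t', h1, h2, h3⟩ := bad_agenda (maj Q) (maj_asymm Q) hB hBA
      exact h3 (hF Q hQ t' h1 h2)
    exact winner_dom (maj Q) (maj_asymm Q) A hdom t (ht.2 A)
  · intro hS Q hQ t ht _
    exact hS Q hQ t ht

/-- For an incomplete weighted profile `P`,
the fair strong Condorcet winners coincide with the strong Condorcet
winners: `FSC(P) = SC(P)`. -/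
theorem stmt13 {α : Type} [Fintype α] (P : Profile α) :
    ∀ A : α, FSCp P A ↔ SCp P A :=
  stmt13' P
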